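/- arXiv:2010.12445 — 5 statements merged into one kernel-verified Lean document; each statement's English description precedes it below -/
import Mathlib

section
/- Let R be a commutative ring, m, n natural numbers, M an n × m matrix over R, and I ⊆ R the ideal generated by the determinants of all n × n submatrices of M (that is, by det(M.submatrix id g) for all functions g : Fin n → Fin m). Then: (i) for every commutative R-algebra A, the A-linear map A^m → A^n induced by M (with entries mapped into A) is surjective if and only if I generates the unit ideal of A; (ii) for every prime ideal p of R, the map κ(p)^m → κ(p)^n induced by M over the residue field κ(p) of p is surjective if and only if I is not contained in p. In particular the locus {p ∈ Spec R | I ⊄ p} where M induces a surjection is a quasi-compact open subset of Spec R. -/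
open Matrix in
theorem field_surj_minor {k : Type*} [Field k] {m n : ℕ}
    (M : Matrix (Fin n) (Fin m) k) (h : Function.Surjective M.mulVecLin) :
    ∃ g : Fin n → Fin m, (M.submatrix id g).det ≠ 0 := by
  have hrange : Submodule.span k (Set.range Mᵀ) = ⊤ := by
    rw [show Set.range Mᵀ = Set.range M.col from rfl, ← Matrix.range_mulVecLin, LinearMap.range_eq_top]; exact h
  obtain ⟨b, hbsub, hbspan, hbli⟩ := exists_linearIndependent k (Set.range Mᵀ)
  rw [hrange] at hbspan
  have hfin : b.Finite := (Set.finite_range Mᵀ).subset hbsub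
  haveI := hfin.fintype
  let B : Module.Basis b k (Fin n → k) := Module.Basis.mk hbli (by rw [Subtype.range_coe, hbspan])
  have hcard : Fintype.card b = n := by
    have h1 := Module.finrank_eq_card_basis B
    rw [Module.finrank_fin_fun] at h1
    exact h1.symm
  let e : Fin n ≃ b := (Fintype.equivFinOfCardEq hcard).symm
  choose g hg using fun i : Fin n => hbsub (e i).2
  refine ⟨g, ?_⟩
  have hsurj : Function.Surjective (M.submatrix id g).mulVecLin := by
    rw [← LinearMap.range_eq_top, Matrix.range_mulVecLin, ← top_le_iff, ← hbspan]
    refine Submodule.span_le.2 fun x hx => Submodule.subset_span ?_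
    refine ⟨e.symm ⟨x, hx⟩, ?_⟩
    have := hg (e.symm ⟨x, hx⟩)
    rw [Equiv.apply_symm_apply] at this
    ext j
    simpa [Matrix.transpose_apply, Matrix.submatrix_apply] using congrFun this j
  have hmv : Function.Surjective (M.submatrix id g).mulVec := by
    have : ⇑(M.submatrix id g).mulVecLin = (M.submatrix id g).mulVec :=
      funext fun v => Matrix.mulVecLin_apply _ v
    rwa [this] at hsurj
  have := Matrix.mulVec_surjective_iff_isUnit.mp hmv
  exact isUnit_iff_ne_zero.mp ((Matrix.isUnit_iff_isUnit_det _).mp this)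

set_option maxHeartbeats 1000000 in
theorem surj_iff_minors {A : Type*} [CommRing A] {m n : ℕ}
    (M : Matrix (Fin n) (Fin m) A) :
    Function.Surjective M.mulVecLin ↔
      Ideal.span (Set.range fun g : Fin n → Fin m => (M.submatrix id g).det) = ⊤ := by
  constructor
  · intro h
    by_contra hne
    obtain ⟨𝔪, hmax, hle⟩ := Ideal.exists_le_maximal _ hne
    haveI := hmax
    let φ := Ideal.Quotient.mk 𝔪
    have hsurj : Function.Surjective (M.map φ).mulVecLin := by
      intro y
      choose z hz using fun a => Ideal.Quotient.mk_surjective (y a)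
      obtain ⟨x, hx⟩ := h z
      have hx' : M.mulVec x = z := hx
      refine ⟨φ ∘ x, funext fun a => ?_⟩
      show ((M.map φ).mulVec (⇑φ ∘ x)) a = y a
      rw [← RingHom.map_mulVec φ M x a, hx', hz]
    have key : ∀ g : Fin n → Fin m, ((M.map φ).submatrix id g).det = 0 := by
      intro g
      rw [Matrix.submatrix_map, ← RingHom.mapMatrix_apply, ← RingHom.map_det,
        Ideal.Quotient.eq_zero_iff_mem]
      exact hle (Ideal.subset_span ⟨g, rfl⟩)
    obtain ⟨g, hg⟩ :=
      letI : Field (A ⧸ 𝔪) := Ideal.Quotient.field 𝔪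
      field_surj_minor (M.map φ) hsurj
    exact hg (key g)
  · intro h
    have h1 : (1 : A) ∈ Ideal.span (Set.range fun g : Fin n → Fin m =>
        (M.submatrix id g).det) := Ideal.eq_top_iff_one _ |>.mp h
    rw [Ideal.span, Submodule.mem_span_range_iff_exists_fun] at h1
    obtain ⟨c, hc⟩ := h1
    let P : (Fin n → Fin m) → Matrix (Fin m) (Fin n) A :=
      fun g => Matrix.of fun j i => if g i = j then 1 else 0
    have hMP : ∀ g, M * P g = M.submatrix id g := by
      intro g
      ext a i
      simp [Matrix.mul_apply, P, Matrix.submatrix_apply]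
    let N : Matrix (Fin m) (Fin n) A :=
      ∑ g : Fin n → Fin m, c g • (P g * (M.submatrix id g).adjugate)
    have hMN : M * N = 1 := by
      rw [Matrix.mul_sum]
      simp_rw [Matrix.mul_smul, ← Matrix.mul_assoc, hMP, Matrix.mul_adjugate, smul_smul]
      rw [← Finset.sum_smul]
      have hc' : ∑ i : Fin n → Fin m, c i * (M.submatrix id i).det = 1 := by
        simpa [smul_eq_mul] using hc
      rw [hc', one_smul]
    intro y
    refine ⟨N.mulVec y, ?_⟩
    rw [Matrix.mulVecLin_apply, Matrix.mulVec_mulVec, hMN, Matrix.one_mulVec]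

universe u

/-- Affine two-term case of Lemma 5.2: for a matrix `M : Matrix (Fin n) (Fin m) R`, with `I` the
ideal generated by the `n × n` minors of `M`, the induced map `A^m → A^n` is surjective iff `I`
generates the unit ideal of `A`; over a residue field `κ(p)` it is surjective iff `I ⊄ p`;
and the locus `{p | I ⊄ p}` is a quasi-compact open subset of `Spec R`. -/
theorem matrix_surjective_locus
    {R : Type u} [CommRing R] (m n : ℕ) (M : Matrix (Fin n) (Fin m) R)
    (I : Ideal R)
    (hI : I = Ideal.span {d : R | ∃ g : Fin n → Fin m, d = (M.submatrix id g).det}) :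
    (∀ (A : Type u) [CommRing A] [Algebra R A],
      Function.Surjective (M.map (algebraMap R A)).mulVecLin ↔
        Ideal.map (algebraMap R A) I = ⊤) ∧
    (∀ p : PrimeSpectrum R,
      Function.Surjective
        (M.map (algebraMap R
          (IsLocalRing.ResidueField (Localization.AtPrime p.asIdeal)))).mulVecLin ↔
        ¬ I ≤ p.asIdeal) ∧
    (IsOpen {p : PrimeSpectrum R | ¬ I ≤ p.asIdeal} ∧
      IsCompact {p : PrimeSpectrum R | ¬ I ≤ p.asIdeal}) := by
  have hI' : I = Ideal.span (Set.range fun g : Fin n → Fin m => (M.submatrix id g).det) := by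
    rw [hI]; congr 1; ext d; simp [eq_comm, Set.mem_setOf_eq]
  have part1 : ∀ (A : Type u) [CommRing A] [Algebra R A],
      Function.Surjective (M.map (algebraMap R A)).mulVecLin ↔
        Ideal.map (algebraMap R A) I = ⊤ := by
    intro A _ _
    rw [surj_iff_minors]
    have : Ideal.map (algebraMap R A) I =
        Ideal.span (Set.range fun g : Fin n → Fin m =>
          ((M.map (algebraMap R A)).submatrix id g).det) := by
      rw [hI', Ideal.map_span, ← Set.range_comp]
      congr 1
      ext d
      constructor
      · rintro ⟨g, rfl⟩
        exact ⟨g, by simp [Function.comp, ← RingHom.mapMatrix_apply, ← RingHom.map_det,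
          Matrix.submatrix_map]⟩
      · rintro ⟨g, rfl⟩
        exact ⟨g, by simp [Function.comp, ← RingHom.mapMatrix_apply, ← RingHom.map_det,
          Matrix.submatrix_map]⟩
    rw [this]
  refine ⟨part1, ?_, ?_, ?_⟩
  · intro p
    set κ := IsLocalRing.ResidueField (Localization.AtPrime p.asIdeal)
    have hker : RingHom.ker (algebraMap R κ) = p.asIdeal := by
      have heq : algebraMap R κ =
          (IsLocalRing.residue _).comp (algebraMap R (Localization.AtPrime p.asIdeal)) := by
        ext x
        exact (IsScalarTower.algebraMap_apply R (Localization.AtPrime p.asIdeal) _ x).trans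
          (by rw [IsLocalRing.ResidueField.algebraMap_eq]; rfl)
      rw [heq, ← RingHom.comap_ker, IsLocalRing.ker_residue]
      exact Localization.AtPrime.comap_maximalIdeal
    rw [part1 κ]
    constructor
    · intro htop hle
      have hbot : Ideal.map (algebraMap R κ) I ≤ ⊥ := by
        rw [Ideal.map_le_iff_le_comap]
        intro x hx
        have : algebraMap R κ x = 0 := by
          rw [← RingHom.mem_ker, hker]; exact hle hx
        simp [Ideal.mem_comap, this]
      rw [htop] at hbot
      exact one_ne_zero ((Ideal.mem_bot).mp (hbot Submodule.mem_top))
    · intro hnle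
      obtain ⟨x, hxI, hxp⟩ := SetLike.not_le_iff_exists.mp hnle
      refine Ideal.eq_top_of_isUnit_mem _ (Ideal.mem_map_of_mem _ hxI)
        (isUnit_iff_ne_zero.2 ?_)
      rw [Ne, ← RingHom.mem_ker, hker]
      exact hxp
  · have hset : {p : PrimeSpectrum R | ¬ I ≤ p.asIdeal} =
        (PrimeSpectrum.zeroLocus (I : Set R))ᶜ := by
      ext p
      simp [PrimeSpectrum.mem_zeroLocus, SetLike.coe_subset_coe]
    rw [hset]
    exact (PrimeSpectrum.isClosed_zeroLocus _).isOpen_compl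
  · have hset : {p : PrimeSpectrum R | ¬ I ≤ p.asIdeal} =
        ⋃ g : Fin n → Fin m,
          (PrimeSpectrum.basicOpen ((M.submatrix id g).det) : Set (PrimeSpectrum R)) := by
      ext p
      simp only [Set.mem_setOf_eq, Set.mem_iUnion, SetLike.mem_coe,
        PrimeSpectrum.mem_basicOpen]
      constructor
      · intro hnle
        by_contra hall
        push_neg at hall
        apply hnle
        rw [hI']
        refine Ideal.span_le.2 ?_
        rintro d ⟨g, rfl⟩
        exact hall g
      · rintro ⟨g, hg⟩ hle
        exact hg (hle (hI' ▸ Ideal.subset_span ⟨g, rfl⟩))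
    rw [hset]
    exact isCompact_iUnion fun g => PrimeSpectrum.isCompact_basicOpen _
end

section
/- Let R be a commutative ring and φ : P → Q an R-linear map between finitely generated projective R-modules. Assume that for every prime ideal p of R the induced map P ⊗_R κ(p) → Q ⊗_R κ(p) over the residue field κ(p) is surjective. Then φ is surjective and the kernel of φ is a finitely generated projective R-module. -/
universe u v

open TensorProduct

/-- Surjectivity counterpart of the fiberwise criterion used in the proof of Lemma 5.2: a map of
finitely generated projective modules which is surjective on every residue-field fiber is
surjective with finitely generated projective kernel. -/
theorem surjective_projective_ker_of_fiberwise_surjective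
    {R : Type u} [CommRing R] {P Q : Type v} [AddCommGroup P] [AddCommGroup Q]
    [Module R P] [Module R Q]
    [Module.Finite R P] [Module.Projective R P]
    [Module.Finite R Q] [Module.Projective R Q]
    (φ : P →ₗ[R] Q)
    (h : ∀ p : PrimeSpectrum R,
      Function.Surjective
        (LinearMap.baseChange
          (IsLocalRing.ResidueField (Localization.AtPrime p.asIdeal)) φ)) :
    Function.Surjective φ ∧
      Module.Finite R (LinearMap.ker φ) ∧
      Module.Projective R (LinearMap.ker φ) := by
  -- Let M be the cokernel of φ.
  set M := Q ⧸ LinearMap.range φ with hM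
  have hsurj : Function.Surjective φ := by
    -- Show the support of M is empty.
    have hsupp : Module.support R M = ∅ := by
      rw [Set.eq_empty_iff_forall_notMem]
      intro p hp
      set A := Localization.AtPrime p.asIdeal
      set k := IsLocalRing.ResidueField A
      -- k ⊗[R] M is trivial, by right exactness
      have h1 : Subsingleton (k ⊗[R] M) := by
        refine subsingleton_of_forall_eq 0 fun x => ?_
        obtain ⟨y, rfl⟩ :=
          LinearMap.lTensor_surjective k (g := (LinearMap.range φ).mkQ)
            (Submodule.mkQ_surjective (LinearMap.range φ)) x
        obtain ⟨z, rfl⟩ := h p y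
        have h0 : (LinearMap.range φ).mkQ.comp φ = 0 := by
          ext x; simp [Submodule.Quotient.mk_eq_zero]
        show ((LinearMap.range φ).mkQ.lTensor k) ((φ.lTensor k) z) = 0
        rw [← LinearMap.comp_apply, ← LinearMap.lTensor_comp, h0]
        simp
      -- hence A ⊗[R] M is trivial by Nakayama
      have h2 : Subsingleton (A ⊗[R] M) := by
        have e : (k ⊗[A] (A ⊗[R] M)) ≃ₗ[k] k ⊗[R] M :=
          TensorProduct.AlgebraTensorModule.cancelBaseChange R A k k M
        have : Subsingleton (k ⊗[A] (A ⊗[R] M)) := e.toEquiv.subsingleton_congr.mpr h1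
        exact (IsLocalRing.subsingleton_tensorProduct (R := A)).mp this
      -- hence the localization of M at p is trivial
      have : IsLocalizedModule p.asIdeal.primeCompl (TensorProduct.mk R A M 1) := by
        rw [isLocalizedModule_iff_isBaseChange p.asIdeal.primeCompl A]
        exact TensorProduct.isBaseChange R M A
      have e2 : LocalizedModule p.asIdeal.primeCompl M ≃ₗ[R] A ⊗[R] M :=
        IsLocalizedModule.iso p.asIdeal.primeCompl (TensorProduct.mk R A M 1)
      have : Subsingleton (LocalizedModule p.asIdeal.primeCompl M) :=
        e2.toEquiv.subsingleton_congr.mpr h2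
      exact (Module.notMem_support_iff.mpr this) hp
    have : Subsingleton M := Module.support_eq_empty_iff.mp hsupp
    have : LinearMap.range φ = ⊤ :=
      Submodule.Quotient.subsingleton_iff.mp this
    exact LinearMap.range_eq_top.mp this
  -- Splitting
  obtain ⟨σ, hσ⟩ := Module.projective_lifting_property φ LinearMap.id hsurj
  have hσ' : ∀ y : Q, φ (σ y) = y := fun y => by
    have := congrArg (fun f => f y) hσ; simpa using this
  have hmem : ∀ x : P, ((LinearMap.id : P →ₗ[R] P) - σ.comp φ) x ∈ LinearMap.ker φ := by
    intro x
    simp [LinearMap.mem_ker, hσ' (φ x)]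
  set π : P →ₗ[R] LinearMap.ker φ :=
    ((LinearMap.id : P →ₗ[R] P) - σ.comp φ).codRestrict (LinearMap.ker φ) hmem with hπ
  have hretr : π.comp (LinearMap.ker φ).subtype = LinearMap.id := by
    ext x
    have hx : φ x.1 = 0 := x.2
    simp [hπ, LinearMap.codRestrict, hx]
  have hπsurj : Function.Surjective π := fun y => ⟨y.1, by
    have := congrArg (fun f => f y) hretr; simpa using this⟩
  refine ⟨hsurj, Module.Finite.of_surjective π hπsurj,
    Module.Projective.of_split (LinearMap.ker φ).subtype π hretr⟩
end

section
/- Let R be a commutative ring, n a natural number, a₁, …, aₙ ∈ R, and C = R[x₁, …, xₙ]/(a₁x₁ + ⋯ + aₙxₙ − 1). Then C is flat as an R-module, and a prime ideal p of R lies in the image of the induced map Spec C → Spec R if and only if aᵢ ∉ p for some i. In other words, the image of Spec C → Spec R is exactly the complement of the vanishing locus V(a₁, …, aₙ). -/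
set_option maxHeartbeats 1000000

universe u

open MvPolynomial

section Aux

variable {R : Type u} [CommRing R] {σ : Type*}

/-- The substitution `xᵢ ↦ xᵢ / L` into the localization away from `L`. -/
noncomputable def toAwayHom (L : MvPolynomial σ R) :
    MvPolynomial σ R →+* Localization.Away L :=
  eval₂Hom ((algebraMap (MvPolynomial σ R) (Localization.Away L)).comp MvPolynomial.C)
    fun i => algebraMap (MvPolynomial σ R) (Localization.Away L) (X i) *
      IsLocalization.Away.invSelf L

lemma toAwayHom_isHomogeneous (L : MvPolynomial σ R) {e : ℕ} {p : MvPolynomial σ R}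
    (hp : p.IsHomogeneous e) :
    toAwayHom L p =
      algebraMap (MvPolynomial σ R) (Localization.Away L) p *
        IsLocalization.Away.invSelf L ^ e := by
  conv_lhs => rw [p.as_sum]
  conv_rhs => rw [p.as_sum]
  rw [map_sum, map_sum, Finset.sum_mul]
  refine Finset.sum_congr rfl fun s hs => ?_
  have hdeg : ∑ i ∈ s.support, s i = e := by
    have := hp (mem_support_iff.mp hs)
    rw [← Finsupp.degree_apply, Finsupp.degree_eq_weight_one]
    exact this
  rw [toAwayHom, coe_eval₂Hom, eval₂_monomial, monomial_eq, map_mul]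
  simp only [Finsupp.prod, mul_pow, Finset.prod_mul_distrib, Finset.prod_pow_eq_pow_sum,
    map_prod, map_pow, RingHom.coe_comp, Function.comp_apply]
  rw [hdeg, mul_assoc]

lemma exists_pow_mul_eq_zero_of_mem_span (L : MvPolynomial σ R) (hL : L.IsHomogeneous 1)
    {d : ℕ} {h : MvPolynomial σ R} (hh : h.IsHomogeneous d)
    (hmem : h ∈ Ideal.span {L - 1}) : ∃ k : ℕ, L ^ k * h = 0 := by
  have hunit : algebraMap (MvPolynomial σ R) (Localization.Away L) L *
      IsLocalization.Away.invSelf L = 1 := IsLocalization.Away.mul_invSelf L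
  have hg : toAwayHom L (L - 1) = 0 := by
    rw [map_sub, map_one, toAwayHom_isHomogeneous L hL, pow_one, hunit, sub_self]
  obtain ⟨q, hq⟩ := Ideal.mem_span_singleton.mp hmem
  have h0 : toAwayHom L h = 0 := by rw [hq, map_mul, hg, zero_mul]
  rw [toAwayHom_isHomogeneous L hh] at h0
  have h1 : algebraMap (MvPolynomial σ R) (Localization.Away L) h = 0 := by
    have h2 := congrArg
      (fun z => z * algebraMap (MvPolynomial σ R) (Localization.Away L) L ^ d) h0
    simp only [zero_mul, mul_assoc, ← mul_pow] at h2
    rw [mul_comm (IsLocalization.Away.invSelf L), hunit, one_pow, mul_one] at h2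
    exact h2
  obtain ⟨m, hm⟩ :=
    (IsLocalization.map_eq_zero_iff (Submonoid.powers L) (Localization.Away L) h).mp h1
  obtain ⟨k, hk⟩ := m.2
  refine ⟨k, ?_⟩
  have hk' : L ^ k = (m : MvPolynomial σ R) := hk
  rw [hk']
  exact hm

end Aux

section Flat

variable {R : Type u} [CommRing R]

lemma flat_aux (n : ℕ) (a : Fin n → R) :
    Module.Flat R
      (MvPolynomial (Fin n) R ⧸
        Ideal.span {(∑ i, MvPolynomial.C (a i) * MvPolynomial.X i) - 1}) := by
  classical
  set L : MvPolynomial (Fin n) R := ∑ i, MvPolynomial.C (a i) * MvPolynomial.X i with hLdef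
  have hL : L.IsHomogeneous 1 := by
    apply IsHomogeneous.sum
    intro i _
    exact isHomogeneous_C_mul_X _ _
  set I : Ideal (MvPolynomial (Fin n) R) := Ideal.span {L - 1} with hIdef
  set mk := Ideal.Quotient.mkₐ R I with hmkdef
  have hmkL : mk L = 1 := by
    have : mk L = mk 1 := Ideal.Quotient.eq.mpr (Ideal.subset_span rfl)
    rw [this, map_one]
  apply Module.Flat.of_forall_isTrivialRelation
  intro ι f x hfx
  choose P hP using fun i => Ideal.Quotient.mkₐ_surjective R I (x i)
  set d := Finset.univ.sup fun i => (P i).totalDegree with hd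
  set h : Fin ι → MvPolynomial (Fin n) R := fun i =>
    ∑ k ∈ Finset.range ((P i).totalDegree + 1),
      homogeneousComponent k (P i) * L ^ (d - k) with hhdef
  have hhom : ∀ i, (h i).IsHomogeneous d := by
    intro i
    rw [← mem_homogeneousSubmodule]
    apply Submodule.sum_mem
    intro k hk
    rw [mem_homogeneousSubmodule]
    have hk1 : k ≤ (P i).totalDegree := Nat.lt_succ_iff.mp (Finset.mem_range.mp hk)
    have hk2 : (P i).totalDegree ≤ d :=
      Finset.le_sup (f := fun i => (P i).totalDegree) (Finset.mem_univ i)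
    have hkd : k ≤ d := le_trans hk1 hk2
    have := (homogeneousComponent_isHomogeneous k (P i)).mul (hL.pow (d - k))
    rwa [one_mul, Nat.add_sub_cancel' hkd] at this
  have hmkh : ∀ i, mk (h i) = x i := by
    intro i
    rw [hhdef]
    simp only [map_sum, map_mul, map_pow, hmkL, one_pow, mul_one]
    rw [← map_sum, sum_homogeneousComponent, hP]
  have hsum : (∑ i, f i • h i) ∈ I := by
    have hz : mk (∑ i, f i • h i) = 0 := by
      simp only [map_sum, map_smul, hmkh]
      exact hfx
    rwa [Ideal.Quotient.mkₐ_eq_mk, Ideal.Quotient.eq_zero_iff_mem] at hz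
  have hHsum : (∑ i, f i • h i).IsHomogeneous d := by
    rw [← mem_homogeneousSubmodule]
    exact Submodule.sum_mem _ fun i _ => Submodule.smul_mem _ _
      (by rw [mem_homogeneousSubmodule]; exact hhom i)
  rw [hIdef] at hsum
  obtain ⟨k, hk⟩ := exists_pow_mul_eq_zero_of_mem_span (R := R) (σ := Fin n) L hL hHsum hsum
  have hrel : ∑ i, f i • (L ^ k * h i) = 0 := by
    rw [← hk, Finset.mul_sum]
    exact Finset.sum_congr rfl fun i _ => (mul_smul_comm _ _ _).symm
  obtain ⟨κ, b, y, hy, hb⟩ := Module.Flat.isTrivialRelation_of_sum_smul_eq_zero (R := R)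
    (M := MvPolynomial (Fin n) R) (f := f) (x := fun i => L ^ k * h i) hrel
  refine ⟨κ, b, fun j => mk (y j), fun i => ?_, hb⟩
  have hx : mk (L ^ k * h i) = x i := by
    rw [map_mul, map_pow, hmkL, one_pow, one_mul, hmkh]
  have hyi : L ^ k * h i = ∑ j, b i j • y j := hy i
  rw [← hx, hyi]
  simp only [map_sum, map_smul]

end Flat

/-- Construction from the proof of Theorem 4.2: with
`C = R[x₁,…,xₙ]/(a₁x₁ + ⋯ + aₙxₙ - 1)`, the ring `C` is flat over `R` and the image of
`Spec C → Spec R` is exactly the complement of the vanishing locus `V(a₁,…,aₙ)`. -/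
theorem flat_and_image_of_inverting_linear_form
    {R : Type u} [CommRing R] (n : ℕ) (a : Fin n → R) :
    Module.Flat R
      (MvPolynomial (Fin n) R ⧸
        Ideal.span {(∑ i, MvPolynomial.C (a i) * MvPolynomial.X i) - 1}) ∧
      ∀ p : PrimeSpectrum R,
        (p ∈ Set.range
          (PrimeSpectrum.comap
            (algebraMap R
              (MvPolynomial (Fin n) R ⧸
                Ideal.span {(∑ i, MvPolynomial.C (a i) * MvPolynomial.X i) - 1})))) ↔
        ∃ i, a i ∉ p.asIdeal := by
  classical
  set L : MvPolynomial (Fin n) R := ∑ i, MvPolynomial.C (a i) * MvPolynomial.X i with hLdef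
  set I : Ideal (MvPolynomial (Fin n) R) := Ideal.span {L - 1} with hIdef
  refine ⟨flat_aux n a, fun p => ⟨?_, ?_⟩⟩
  · rintro ⟨q, rfl⟩
    by_contra hcon
    push_neg at hcon
    have hmem : ∀ i, algebraMap R (MvPolynomial (Fin n) R ⧸ I) (a i) ∈ q.asIdeal := by
      intro i
      exact hcon i
    have hLq : Ideal.Quotient.mk I L ∈ q.asIdeal := by
      have : Ideal.Quotient.mk I L =
          ∑ i, algebraMap R (MvPolynomial (Fin n) R ⧸ I) (a i) *
            Ideal.Quotient.mk I (MvPolynomial.X i) := by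
        rw [hLdef, map_sum]
        exact Finset.sum_congr rfl fun i _ => by rw [map_mul]; rfl
      rw [this]
      exact Ideal.sum_mem _ fun i _ => Ideal.mul_mem_right _ _ (hmem i)
    have hone : (1 : MvPolynomial (Fin n) R ⧸ I) ∈ q.asIdeal := by
      have h1 : Ideal.Quotient.mk I L = 1 := by
        have : Ideal.Quotient.mk I L = Ideal.Quotient.mk I 1 :=
          Ideal.Quotient.eq.mpr (Ideal.subset_span rfl)
        rw [this, map_one]
      rwa [h1] at hLq
    exact q.isPrime.ne_top (Ideal.eq_top_of_isUnit_mem _ hone isUnit_one)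
  · rintro ⟨i, hi⟩
    haveI := p.isPrime
    set K := FractionRing (R ⧸ p.asIdeal) with hK
    set φ₀ : R →+* K := (algebraMap (R ⧸ p.asIdeal) K).comp (Ideal.Quotient.mk p.asIdeal)
      with hφ₀
    have hker : ∀ r : R, φ₀ r = 0 ↔ r ∈ p.asIdeal := by
      intro r
      rw [hφ₀, RingHom.comp_apply]
      constructor
      · intro hr
        have h0 : (algebraMap (R ⧸ p.asIdeal) K) ((Ideal.Quotient.mk p.asIdeal) r) =
            (algebraMap (R ⧸ p.asIdeal) K) 0 := by rwa [map_zero]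
        exact Ideal.Quotient.eq_zero_iff_mem.mp (IsFractionRing.injective (R ⧸ p.asIdeal) K h0)
      · intro hr
        rw [Ideal.Quotient.eq_zero_iff_mem.mpr hr, map_zero]
    have hu : φ₀ (a i) ≠ 0 := fun hc => hi ((hker _).mp hc)
    set Φ : MvPolynomial (Fin n) R →+* K :=
      eval₂Hom φ₀ (fun j => if j = i then (φ₀ (a i))⁻¹ else 0) with hΦ
    have hΦL : Φ L = 1 := by
      rw [hLdef, map_sum]
      have : ∀ j : Fin n, Φ (MvPolynomial.C (a j) * MvPolynomial.X j) =
          if j = i then φ₀ (a i) * (φ₀ (a i))⁻¹ else 0 := by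
        intro j
        rw [hΦ, map_mul, eval₂Hom_C, coe_eval₂Hom, eval₂_X]
        split
        · rename_i hji; subst hji; rfl
        · rw [mul_zero]
      rw [Finset.sum_congr rfl fun j _ => this j, Finset.sum_ite_eq' Finset.univ i]
      simp [mul_inv_cancel₀ hu]
    have hΦI : ∀ z ∈ I, Φ z = 0 := by
      intro z hz
      rw [hIdef] at hz
      obtain ⟨c, hc⟩ := Ideal.mem_span_singleton.mp hz
      rw [hc, map_mul, map_sub, map_one, hΦL, sub_self, zero_mul]
    set Ψ : (MvPolynomial (Fin n) R ⧸ I) →+* K := Ideal.Quotient.lift I Φ hΦI with hΨ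
    refine ⟨⟨RingHom.ker Ψ, RingHom.ker_isPrime Ψ⟩, ?_⟩
    ext r
    show algebraMap R (MvPolynomial (Fin n) R ⧸ I) r ∈ RingHom.ker Ψ ↔ r ∈ p.asIdeal
    rw [RingHom.mem_ker]
    have : Ψ (algebraMap R (MvPolynomial (Fin n) R ⧸ I) r) = φ₀ r := by
      have halg : algebraMap R (MvPolynomial (Fin n) R ⧸ I) r =
          Ideal.Quotient.mk I (MvPolynomial.C r) := rfl
      rw [halg, hΨ, Ideal.Quotient.lift_mk, hΦ, eval₂Hom_C]
    rw [this]
    exact hker r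
end

section
/- Let R be a commutative ring and f : R^a → R^b, g : R^b → R^c be R-linear maps between finite free modules with g ∘ f = 0. Then there exists a quasi-compact open subset U of Spec R such that for every commutative R-algebra A the following are equivalent: (i) the base-changed sequence A^a → A^b → A^c → 0 is exact, i.e. the induced map g_A : A^b → A^c is surjective and the kernel of g_A equals the image of f_A; (ii) for every prime ideal q of A, its contraction to R lies in U. -/
universe u v

open Matrix TensorProduct

namespace ExactnessLocusAux

section Minors
variable {A : Type*} [CommRing A]

/-- The ideal generated by the `r × r` minors of a matrix. -/
noncomputable def minorsIdeal (A : Type*) [CommRing A] (r m n : ℕ)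
    (M : Matrix (Fin m) (Fin n) A) : Ideal A :=
  Ideal.span (Set.range fun p : (Fin r ↪ Fin m) × (Fin r ↪ Fin n) =>
    (M.submatrix p.1 p.2).det)

/-- Extend a vector indexed by `Fin k` by zero along an embedding. -/
noncomputable def extVec {k n : ℕ} (T : Fin k ↪ Fin n) (x : Fin k → A) : Fin n → A :=
  fun j => ∑ i, if T i = j then x i else 0

lemma mulVec_extVec {m k n : ℕ} (M : Matrix (Fin m) (Fin n) A) (T : Fin k ↪ Fin n)
    (x : Fin k → A) : M.mulVec (extVec T x) = (M.submatrix id T).mulVec x := by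
  funext i
  simp only [mulVec, dotProduct, extVec, Finset.mul_sum, mul_ite, mul_zero]
  rw [Finset.sum_comm]
  refine Finset.sum_congr rfl fun t _ => ?_
  simp [eq_comm, Finset.sum_ite_eq]

lemma exists_mulVec_eq {m n : ℕ} {ι : Type*} [Fintype ι] (M : Matrix (Fin m) (Fin n) A)
    (s : ι → A) (hs : Ideal.span (Set.range s) = ⊤) (v : Fin m → A)
    (hv : ∀ i, ∃ y, M.mulVec y = s i • v) : ∃ y, M.mulVec y = v := by
  have h1 : (1 : A) ∈ Ideal.span (Set.range s) := hs ▸ Submodule.mem_top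
  obtain ⟨u, hu⟩ := (Submodule.mem_span_range_iff_exists_fun A).mp h1
  choose y hy using hv
  refine ⟨∑ i, u i • y i, ?_⟩
  have h2 : M.mulVecLin (∑ i, u i • y i) = ∑ i, u i • M.mulVecLin (y i) := by
    rw [map_sum]; simp
  simp only [mulVecLin_apply] at h2
  rw [h2]
  simp only [hy, smul_smul, ← Finset.sum_smul]
  simp only [smul_eq_mul] at hu
  rw [hu, one_smul]


lemma mulVec_surjective_of_minors {b c : ℕ} (G : Matrix (Fin c) (Fin b) A)
    (h : minorsIdeal A c c b G = ⊤) : Function.Surjective G.mulVec := by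
  intro w
  refine exists_mulVec_eq G _ h w ?_
  rintro ⟨S, T⟩
  have hSbij : Function.Bijective S := Finite.injective_iff_bijective.mp S.injective
  set N := G.submatrix S T with hNdef
  refine ⟨extVec T (N.adjugate.mulVec (w ∘ S)), ?_⟩
  have hN : N.mulVec (N.adjugate.mulVec (w ∘ S)) = N.det • (w ∘ S) := by
    rw [mulVec_mulVec, Matrix.mul_adjugate, smul_mulVec, one_mulVec]
  rw [mulVec_extVec]
  funext i
  obtain ⟨i0, rfl⟩ := hSbij.2 i
  have : ((G.submatrix id T).mulVec (N.adjugate.mulVec (w ∘ S))) (S i0)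
      = (N.mulVec (N.adjugate.mulVec (w ∘ S))) i0 := by
    simp [mulVec, dotProduct, hNdef, submatrix]
  rw [this, hN]
  simp

lemma exists_preimage_of_minors {a b c r : ℕ} (hr : r + c = b)
    (F : Matrix (Fin b) (Fin a) A) (G : Matrix (Fin c) (Fin b) A) (H : Matrix (Fin b) (Fin c) A)
    (hGF : G * F = 0) (hGH : G * H = 1)
    (hm : minorsIdeal A r b a F = ⊤) (v : Fin b → A) (hv : G.mulVec v = 0) :
    ∃ y, F.mulVec y = v := by
  refine exists_mulVec_eq F _ hm v ?_
  rintro ⟨S, T⟩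
  let e : Fin r ⊕ Fin c ≃ Fin b := finSumFinEquiv.trans (finCongr hr)
  let P' : Matrix (Fin b) (Fin r ⊕ Fin c) A := fromCols (F.submatrix id T) H
  let Q' : Matrix (Fin r ⊕ Fin c) (Fin b) A :=
    fromRows ((1 : Matrix (Fin b) (Fin b) A).submatrix S id) G
  let P : Matrix (Fin b) (Fin b) A := P'.submatrix id e.symm
  let Q : Matrix (Fin b) (Fin b) A := Q'.submatrix e.symm id
  have h11 : (1 : Matrix (Fin b) (Fin b) A).submatrix S id * F.submatrix id T
      = F.submatrix S T := by
    ext i j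
    simp [Matrix.mul_apply, Matrix.one_apply, ite_mul, Finset.sum_ite_eq]
  have h12 : (1 : Matrix (Fin b) (Fin b) A).submatrix S id * H = H.submatrix S id := by
    ext i j
    simp [Matrix.mul_apply, Matrix.one_apply, ite_mul, Finset.sum_ite_eq]
  have h21 : G * F.submatrix id T = 0 := by
    ext i j
    have := congr_fun (congr_fun hGF i) (T j)
    simpa [Matrix.mul_apply] using this
  have hQP : Q' * P' = fromBlocks (F.submatrix S T) (H.submatrix S id) 0 1 := by
    rw [show Q' * P' = fromBlocks
        ((1 : Matrix (Fin b) (Fin b) A).submatrix S id * F.submatrix id T)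
        ((1 : Matrix (Fin b) (Fin b) A).submatrix S id * H)
        (G * F.submatrix id T) (G * H) from fromRows_mul_fromCols _ _ _ _,
      h11, h12, h21, hGH]
  have hdet : Q.det * P.det = (F.submatrix S T).det := by
    have hQPe : Q * P = (Q' * P').submatrix ⇑e.symm ⇑e.symm := by
      have := submatrix_mul_equiv Q' P' ⇑e.symm (Equiv.refl (Fin b)) ⇑e.symm
      exact this
    rw [← det_mul, hQPe, det_submatrix_equiv_self e.symm, hQP,
      det_fromBlocks_zero₂₁, det_one, mul_one]
  -- the adjugate computation
  set x : Fin b → A := P.adjugate.mulVec v with hxdef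
  have hPx : P.mulVec x = P.det • v := by
    rw [hxdef, mulVec_mulVec, Matrix.mul_adjugate, smul_mulVec, one_mulVec]
  have hPx' : P.mulVec x = (F.submatrix id T).mulVec (x ∘ e ∘ Sum.inl)
      + H.mulVec (x ∘ e ∘ Sum.inr) := by
    have h1 : P.mulVec x = P'.mulVec (x ∘ e) := by
      have := submatrix_mulVec_equiv P' x (id : Fin b → Fin b) e.symm
      simpa using this
    rw [h1, show (x ∘ e) = Sum.elim (x ∘ e ∘ Sum.inl) (x ∘ e ∘ Sum.inr) by
      funext s; cases s <;> rfl]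
    exact fromCols_mulVec_sumElim _ _ _ _
  have hx2 : x ∘ e ∘ Sum.inr = 0 := by
    have h0 : G.mulVec (P.mulVec x) = 0 := by
      rw [hPx, mulVec_smul, hv, smul_zero]
    rw [hPx'] at h0
    have hGFT : G.mulVec ((F.submatrix id T).mulVec (x ∘ e ∘ Sum.inl)) = 0 := by
      rw [mulVec_mulVec, h21, zero_mulVec]
    have hGH' : G.mulVec (H.mulVec (x ∘ e ∘ Sum.inr)) = x ∘ e ∘ Sum.inr := by
      rw [mulVec_mulVec, hGH, one_mulVec]
    rw [Matrix.mulVec_add, hGFT, hGH', zero_add] at h0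
    exact h0
  have hPv : P.det • v = F.mulVec (extVec T (x ∘ e ∘ Sum.inl)) := by
    rw [mulVec_extVec, ← hPx, hPx', hx2, mulVec_zero, add_zero]
  refine ⟨Q.det • extVec T (x ∘ e ∘ Sum.inl), ?_⟩
  rw [mulVec_smul, ← hPv, smul_smul, hdet]

end Minors

section FieldLemmas
variable {K : Type*} [Field K]

lemma exists_cols_linearIndependent {m n : Type*} [Fintype m] [Fintype n]
    (M : Matrix m n K) (r : ℕ) (hr : r ≤ M.rank) :
    ∃ j : Fin r ↪ n, LinearIndependent K (fun i => Mᵀ (j i)) := by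
  classical
  obtain ⟨t, hts, hspan, hind⟩ := exists_linearIndependent K (Set.range Mᵀ)
  have htfin : t.Finite := (Set.finite_range Mᵀ).subset hts
  haveI : Fintype t := htfin.fintype
  have hcard : r ≤ Fintype.card t := by
    have h1 : M.rank = Module.finrank K (Submodule.span K t) := by
      rw [rank_eq_finrank_span_cols, Matrix.col, hspan]
    have h2 : Module.finrank K (Submodule.span K t) = t.toFinset.card :=
      finrank_span_set_eq_card hind
    rw [Set.toFinset_card] at h2
    omega
  let emb : Fin r ↪ t :=
    (Fin.castLEEmb hcard).trans (Fintype.equivFin t).symm.toEmbedding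
  have hmem : ∀ i : Fin r, ((emb i : t) : m → K) ∈ Set.range Mᵀ := fun i => hts (emb i).2
  choose j hj using hmem
  have hinj2 : Function.Injective fun i => ((emb i : t) : m → K) := fun i1 i2 h =>
    emb.injective (Subtype.val_injective h)
  have hjinj : Function.Injective j := by
    intro i1 i2 h12
    apply hinj2
    show ((emb i1 : t) : m → K) = ((emb i2 : t) : m → K)
    rw [← hj, ← hj, h12]
  refine ⟨⟨j, hjinj⟩, ?_⟩
  have heq : (fun i : Fin r => Mᵀ (j i)) = fun i => ((emb i : t) : m → K) := by
    funext i; exact hj i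
  show LinearIndependent K fun i : Fin r => Mᵀ (j i)
  rw [heq]
  exact hind.comp (fun i => emb i) emb.injective

lemma exists_submatrix_det_ne_zero {m n : Type*} [Fintype m] [Fintype n]
    (M : Matrix m n K) (r : ℕ) (hr : r ≤ M.rank) :
    ∃ (i : Fin r ↪ m) (j : Fin r ↪ n), (M.submatrix i j).det ≠ 0 := by
  classical
  obtain ⟨j, hj⟩ := exists_cols_linearIndependent M r hr
  set N : Matrix m (Fin r) K := M.submatrix id j with hN
  have hNT : Nᵀ = fun i => Mᵀ (j i) := by
    funext i k; rfl
  have hrankN : N.rank = r := by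
    rw [rank_eq_finrank_span_cols, Matrix.col, hNT, finrank_span_eq_card hj, Fintype.card_fin]
  have hrankNT : r ≤ Nᵀ.rank := by rw [rank_transpose, hrankN]
  obtain ⟨i, hi⟩ := exists_cols_linearIndependent Nᵀ r hrankNT
  refine ⟨i, j, ?_⟩
  have hsq : (M.submatrix i j) = Matrix.of fun s t => Nᵀᵀ (i s) t := by
    funext s t; rfl
  have : LinearIndependent K fun s => (M.submatrix i j) s := by
    rw [hsq]; exact hi
  have hunit : IsUnit (M.submatrix i j) := linearIndependent_rows_iff_isUnit.mp this
  have : IsUnit (M.submatrix i j).det := (isUnit_iff_isUnit_det _).mp hunit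
  exact this.ne_zero


end FieldLemmas

lemma exists_minor_ne_zero_of_split {K : Type*} [Field K] {a b c : ℕ}
    (F : Matrix (Fin b) (Fin a) K) (G : Matrix (Fin c) (Fin b) K) (H : Matrix (Fin b) (Fin c) K)
    (Km : Matrix (Fin a) (Fin b) K)
    (hGF : G * F = 0) (hGH : G * H = 1) (hFK : F * Km + H * G = 1) :
    (∃ p : (Fin c ↪ Fin c) × (Fin c ↪ Fin b), (G.submatrix p.1 p.2).det ≠ 0) ∧
    (∃ p : (Fin (b - c) ↪ Fin b) × (Fin (b - c) ↪ Fin a), (F.submatrix p.1 p.2).det ≠ 0) := by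
  have hGsurj : Function.Surjective G.mulVecLin := by
    intro w
    refine ⟨H.mulVec w, ?_⟩
    rw [mulVecLin_apply, mulVec_mulVec, hGH, one_mulVec]
  have hrangeG : LinearMap.range G.mulVecLin = ⊤ := LinearMap.range_eq_top.mpr hGsurj
  have hrankG : G.rank = c := by
    rw [Matrix.rank, hrangeG, finrank_top, Module.finrank_pi, Fintype.card_fin]
  have hkerG : LinearMap.ker G.mulVecLin = LinearMap.range F.mulVecLin := by
    ext v
    constructor
    · intro hv
      simp only [LinearMap.mem_ker, mulVecLin_apply] at hv
      refine ⟨Km.mulVec v, ?_⟩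
      have h1 : (F * Km + H * G).mulVec v = v := by rw [hFK, one_mulVec]
      rw [Matrix.add_mulVec, ← mulVec_mulVec, ← mulVec_mulVec, hv, mulVec_zero, add_zero] at h1
      rw [mulVecLin_apply, h1]
    · rintro ⟨u, rfl⟩
      simp only [LinearMap.mem_ker, mulVecLin_apply, mulVec_mulVec, hGF, zero_mulVec]
  have hrn := LinearMap.finrank_range_add_finrank_ker G.mulVecLin
  rw [hrangeG, finrank_top, Module.finrank_pi, Module.finrank_pi, Fintype.card_fin,
    Fintype.card_fin, hkerG] at hrn
  have hrankF : F.rank = b - c := by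
    rw [Matrix.rank]; omega
  constructor
  · obtain ⟨i, j, h⟩ := exists_submatrix_det_ne_zero G c hrankG.ge
    exact ⟨⟨i, j⟩, h⟩
  · obtain ⟨i, j, h⟩ := exists_submatrix_det_ne_zero F (b - c) hrankF.ge
    exact ⟨⟨i, j⟩, h⟩


section Main
variable {A : Type*} [CommRing A]

/-- A right inverse matrix from surjectivity. -/
lemma exists_right_inverse_of_surjective {b c : ℕ} (G : Matrix (Fin c) (Fin b) A)
    (h : Function.Surjective G.mulVec) : ∃ H : Matrix (Fin b) (Fin c) A, G * H = 1 := by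
  classical
  choose hcol hhcol using fun j : Fin c => h (Pi.single j 1)
  refine ⟨Matrix.of fun i j => hcol j i, ?_⟩
  ext i j
  have := congr_fun (hhcol j) i
  simp only [mulVec, dotProduct] at this
  simp only [Matrix.mul_apply, Matrix.of_apply, Matrix.one_apply, this, Pi.single_apply]

lemma matrix_exactness_iff {a b c : ℕ}
    (F : Matrix (Fin b) (Fin a) A) (G : Matrix (Fin c) (Fin b) A) (hGF : G * F = 0) :
    (Function.Surjective G.mulVec ∧
      Function.Exact F.mulVecLin G.mulVecLin) ↔
    (minorsIdeal A c c b G = ⊤ ∧ minorsIdeal A (b - c) b a F = ⊤) := by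
  classical
  constructor
  · rintro ⟨hsurj, hexact⟩
    obtain ⟨H, hGH⟩ := exists_right_inverse_of_surjective G hsurj
    -- build Km with F * Km + H * G = 1
    have hker : ∀ j : Fin b, ∃ y : Fin a → A,
        F.mulVec y = Pi.single j 1 - H.mulVec (G.mulVec (Pi.single j 1)) := by
      intro j
      have hv : G.mulVec (Pi.single j 1 - H.mulVec (G.mulVec (Pi.single j 1))) = 0 := by
        rw [Matrix.mulVec_sub, mulVec_mulVec, mulVec_mulVec, hGH, Matrix.one_mul, sub_self]
      have := (hexact (Pi.single j 1 - H.mulVec (G.mulVec (Pi.single j 1)))).mp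
      simp only [mulVecLin_apply] at this
      obtain ⟨y, hy⟩ := this hv
      exact ⟨y, hy⟩
    choose kcol hkcol using hker
    set Km : Matrix (Fin a) (Fin b) A := Matrix.of fun i j => kcol j i with hKm
    have hFK : F * Km + H * G = 1 := by
      ext i j
      have h1 := congr_fun (hkcol j) i
      have hFKm : (F * Km) i j = (F.mulVec (kcol j)) i := rfl
      have hHG : (H * G) i j = (H.mulVec (G.mulVec (Pi.single j 1))) i := by
        rw [mulVec_mulVec, mulVec_single_one]
        rfl
      rw [Matrix.add_apply, hFKm, h1, hHG, Matrix.one_apply, Pi.sub_apply]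
      rw [show ∀ x y : A, x - y + y = x from fun x y => sub_add_cancel x y, Pi.single_apply]
    -- now deduce both ideals are the whole ring, prime by prime
    have key : ∀ (q : Ideal A), q.IsMaximal →
        ((∃ p : (Fin c ↪ Fin c) × (Fin c ↪ Fin b), (G.submatrix p.1 p.2).det ∉ q) ∧
         (∃ p : (Fin (b-c) ↪ Fin b) × (Fin (b-c) ↪ Fin a), (F.submatrix p.1 p.2).det ∉ q)) := by
      intro q hq
      letI := Ideal.Quotient.field q
      set φ := Ideal.Quotient.mk q
      have h1 : G.map φ * F.map φ = 0 := by rw [← Matrix.map_mul, hGF, Matrix.map_zero ⇑φ (map_zero φ)]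
      have h2 : G.map φ * H.map φ = 1 := by rw [← Matrix.map_mul, hGH, Matrix.map_one ⇑φ (map_zero φ) (map_one φ)]
      have h3 : F.map φ * Km.map φ + H.map φ * G.map φ = 1 := by
        rw [← Matrix.map_mul, ← Matrix.map_mul, ← Matrix.map_add ⇑φ (map_add φ), hFK,
          Matrix.map_one ⇑φ (map_zero φ) (map_one φ)]
      obtain ⟨⟨pG, hpG⟩, ⟨pF, hpF⟩⟩ := exists_minor_ne_zero_of_split (F.map φ) (G.map φ)
        (H.map φ) (Km.map φ) h1 h2 h3
      constructor
      · refine ⟨pG, fun hmem => hpG ?_⟩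
        rw [Matrix.submatrix_map, ← RingHom.mapMatrix_apply, ← RingHom.map_det]
        exact Ideal.Quotient.eq_zero_iff_mem.mpr hmem
      · refine ⟨pF, fun hmem => hpF ?_⟩
        rw [Matrix.submatrix_map, ← RingHom.mapMatrix_apply, ← RingHom.map_det]
        exact Ideal.Quotient.eq_zero_iff_mem.mpr hmem
    constructor
    · by_contra hne
      obtain ⟨q, hqmax, hle⟩ := Ideal.exists_le_maximal _ hne
      obtain ⟨⟨p, hp⟩, _⟩ := key q hqmax
      exact hp (hle (Ideal.subset_span ⟨p, rfl⟩))
    · by_contra hne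
      obtain ⟨q, hqmax, hle⟩ := Ideal.exists_le_maximal _ hne
      obtain ⟨_, ⟨p, hp⟩⟩ := key q hqmax
      exact hp (hle (Ideal.subset_span ⟨p, rfl⟩))
  · rintro ⟨hG, hF⟩
    have hsurj : Function.Surjective G.mulVec := mulVec_surjective_of_minors G hG
    refine ⟨hsurj, ?_⟩
    by_cases hcb : c ≤ b
    · obtain ⟨H, hGH⟩ := exists_right_inverse_of_surjective G hsurj
      intro v
      simp only [mulVecLin_apply]
      constructor
      · intro hv
        obtain ⟨y, hy⟩ := exists_preimage_of_minors (Nat.sub_add_cancel hcb) F G H hGF hGH hF v hv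
        exact ⟨y, hy⟩
      · rintro ⟨u, rfl⟩
        simp only [mulVecLin_apply]
        rw [mulVec_mulVec, hGF, zero_mulVec]
    · -- c > b: no c-minors of G exist, so the ring is trivial
      have hempty : IsEmpty (Fin c ↪ Fin b) :=
        ⟨fun e => hcb (by simpa using Fintype.card_le_of_embedding e)⟩
      have hbot : minorsIdeal A c c b G = ⊥ := by
        unfold minorsIdeal
        rw [Set.range_eq_empty, Ideal.span_empty]
      have h01 : (0 : A) = 1 := by
        have : (1 : A) ∈ (⊥ : Ideal A) := by rw [← hbot, hG]; exact Submodule.mem_top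
        simpa using this.symm
      haveI : Subsingleton A := subsingleton_of_zero_eq_one h01
      intro v
      constructor
      · intro _; exact ⟨0, Subsingleton.elim _ _⟩
      · intro _; exact Subsingleton.elim _ _

end Main

section Glue
variable {R : Type u} [CommRing R] {A : Type v} [CommRing A] [Algebra R A]

/-- The standard `A`-basis equivalence `A ⊗[R] (Fin n → R) ≃ₗ[A] (Fin n → A)`. -/
noncomputable def tpEquiv (R : Type u) [CommRing R] (A : Type v) [CommRing A] [Algebra R A]
    (n : ℕ) : (A ⊗[R] (Fin n → R)) ≃ₗ[A] (Fin n → A) :=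
  (Algebra.TensorProduct.basis A (Pi.basisFun R (Fin n))).equivFun

lemma tpEquiv_conj {m n : ℕ} (h : (Fin n → R) →ₗ[R] (Fin m → R)) (x : A ⊗[R] (Fin n → R)) :
    tpEquiv R A m (h.baseChange A x) =
      ((LinearMap.toMatrix' h).map (algebraMap R A)).mulVec (tpEquiv R A n x) := by
  classical
  have main : (tpEquiv R A m).toLinearMap.comp (h.baseChange A) =
      (((LinearMap.toMatrix' h).map (algebraMap R A)).mulVecLin).comp
        (tpEquiv R A n).toLinearMap := by
    apply Module.Basis.ext (Algebra.TensorProduct.basis A (Pi.basisFun R (Fin n)))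
    intro i
    rw [LinearMap.comp_apply, LinearMap.comp_apply]
    rw [Algebra.TensorProduct.basis_apply]
    rw [LinearEquiv.coe_coe, LinearEquiv.coe_coe]
    have h1 : h.baseChange A (1 ⊗ₜ (Pi.basisFun R (Fin n)) i) = 1 ⊗ₜ (h ((Pi.basisFun R (Fin n)) i)) := by
      simp [LinearMap.baseChange_tmul]
    rw [h1]
    have h2 : tpEquiv R A n ((Algebra.TensorProduct.basis A (Pi.basisFun R (Fin n))) i)
        = Pi.single i 1 := by
      unfold tpEquiv
      funext j
      rw [Module.Basis.equivFun_self]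
      simp [Pi.single_apply, eq_comm]
    have h3 : tpEquiv R A n (1 ⊗ₜ (Pi.basisFun R (Fin n)) i) = Pi.single i 1 := by
      rw [← Algebra.TensorProduct.basis_apply (A := A) (Pi.basisFun R (Fin n)) i]
      exact h2
    -- LHS
    funext j
    have hLHS : tpEquiv R A m (1 ⊗ₜ[R] (h ((Pi.basisFun R (Fin n)) i))) j
        = algebraMap R A (h ((Pi.basisFun R (Fin n)) i) j) := by
      unfold tpEquiv
      rw [Module.Basis.equivFun_apply]
      rw [Algebra.TensorProduct.basis_repr_tmul]
      simp [Pi.basisFun_repr]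
    rw [hLHS, h3]
    rw [mulVecLin_apply, mulVec_single_one]
    simp only [col_apply, Matrix.map_apply]
    rw [LinearMap.toMatrix'_apply]
    have : (Pi.basisFun R (Fin n)) i = fun j' => if j' = i then 1 else 0 := by
      funext j'
      simp [Pi.basisFun_apply, Pi.single_apply]
    rw [this]
    rw [show (fun j' : Fin n => if j' = i then (1 : R) else 0) = Pi.single i 1 from by
      funext j'; simp [Pi.single_apply]]
  exact LinearMap.congr_fun main x

lemma exact_conj {A : Type*} [CommRing A] {M₁ M₂ M₃ N₁ N₂ N₃ : Type*}
    [AddCommGroup M₁] [AddCommGroup M₂] [AddCommGroup M₃]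
    [AddCommGroup N₁] [AddCommGroup N₂] [AddCommGroup N₃]
    [Module A M₁] [Module A M₂] [Module A M₃] [Module A N₁] [Module A N₂] [Module A N₃]
    (e₁ : M₁ ≃ₗ[A] N₁) (e₂ : M₂ ≃ₗ[A] N₂) (e₃ : M₃ ≃ₗ[A] N₃)
    {f : M₁ → M₂} {g : M₂ → M₃} {f' : N₁ → N₂} {g' : N₂ → N₃}
    (hf : ∀ x, e₂ (f x) = f' (e₁ x)) (hg : ∀ x, e₃ (g x) = g' (e₂ x))
    (h : Function.Exact f g) : Function.Exact f' g' := by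
  intro y'
  constructor
  · intro hy'
    have hgz : g (e₂.symm y') = 0 := by
      have h1 := hg (e₂.symm y')
      rw [e₂.apply_symm_apply, hy'] at h1
      exact (LinearEquiv.map_eq_zero_iff e₃).mp h1
    obtain ⟨x, hx⟩ := (h _).mp hgz
    refine ⟨e₁ x, ?_⟩
    rw [← hf, hx, e₂.apply_symm_apply]
  · rintro ⟨x', rfl⟩
    have h1 := hf (e₁.symm x')
    rw [e₁.apply_symm_apply] at h1
    have h2 := hg (f (e₁.symm x'))
    rw [(h _).mpr ⟨_, rfl⟩, map_zero, h1] at h2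
    exact h2.symm

lemma forall_comap_mem_iff {R : Type u} {A : Type v} [CommRing R] [CommRing A] [Algebra R A]
    (I : Ideal R) :
    (∀ q : PrimeSpectrum A, ¬ I ≤ (PrimeSpectrum.comap (algebraMap R A) q).asIdeal)
      ↔ I.map (algebraMap R A) = ⊤ := by
  constructor
  · intro h
    by_contra hne
    obtain ⟨m, hm, hle⟩ := Ideal.exists_le_maximal _ hne
    exact h ⟨m, hm.isPrime⟩ (Ideal.map_le_iff_le_comap.mp hle)
  · intro h q hle
    have h2 := Ideal.map_le_iff_le_comap.mpr hle
    rw [h] at h2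
    exact q.2.ne_top (top_le_iff.mp h2)

lemma minorsIdeal_map {A B : Type*} [CommRing A] [CommRing B] (φ : A →+* B) (r m n : ℕ)
    (M : Matrix (Fin m) (Fin n) A) :
    minorsIdeal B r m n (M.map φ) = (minorsIdeal A r m n M).map φ := by
  unfold minorsIdeal
  rw [Ideal.map_span, ← Set.range_comp]
  have he : (fun p : (Fin r ↪ Fin m) × (Fin r ↪ Fin n) =>
      ((M.map ⇑φ).submatrix ⇑p.1 ⇑p.2).det)
      = ⇑φ ∘ fun p : (Fin r ↪ Fin m) × (Fin r ↪ Fin n) => (M.submatrix ⇑p.1 ⇑p.2).det := by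
    funext p
    simp only [Function.comp_apply, Matrix.submatrix_map, ← RingHom.mapMatrix_apply,
      ← RingHom.map_det]
  rw [he]

lemma mul_eq_top_iff {A : Type*} [CommRing A] (I J : Ideal A) :
    I * J = ⊤ ↔ I = ⊤ ∧ J = ⊤ := by
  constructor
  · intro h
    constructor
    · exact top_le_iff.mp (h ▸ Ideal.mul_le_left)
    · exact top_le_iff.mp (h ▸ Ideal.mul_le_right)
  · rintro ⟨rfl, rfl⟩
    rw [Ideal.top_mul]

end Glue

end ExactnessLocusAux

open scoped Pointwise in
open ExactnessLocusAux in
/-- Affine-target case of Lemma 5.2: given a complex `R^a → R^b → R^c` of finite free modules,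
there is a quasi-compact open subset `U ⊆ Spec R` such that for every commutative `R`-algebra
`A` the base-changed sequence `A^a → A^b → A^c → 0` is exact if and only if every prime of `A`
contracts into `U`. -/
theorem exists_quasiCompact_open_exactness_locus
    {R : Type u} [CommRing R] (a b c : ℕ)
    (f : (Fin a → R) →ₗ[R] (Fin b → R)) (g : (Fin b → R) →ₗ[R] (Fin c → R))
    (hgf : g.comp f = 0) :
    ∃ U : Set (PrimeSpectrum R), IsOpen U ∧ IsCompact U ∧
      ∀ (A : Type v) [CommRing A] [Algebra R A],
        (Function.Surjective (LinearMap.baseChange A g) ∧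
          Function.Exact (LinearMap.baseChange A f) (LinearMap.baseChange A g)) ↔
        ∀ q : PrimeSpectrum A, PrimeSpectrum.comap (algebraMap R A) q ∈ U := by
  classical
  set Mf : Matrix (Fin b) (Fin a) R := LinearMap.toMatrix' f with hMf
  set Mg : Matrix (Fin c) (Fin b) R := LinearMap.toMatrix' g with hMg
  have hMgf : Mg * Mf = 0 := by
    rw [hMg, hMf, ← LinearMap.toMatrix'_comp, hgf, map_zero]
  set Ic : Ideal R := minorsIdeal R c c b Mg with hIc
  set Ir : Ideal R := minorsIdeal R (b - c) b a Mf with hIr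
  set sc : Set R := Set.range fun p : (Fin c ↪ Fin c) × (Fin c ↪ Fin b) =>
    (Mg.submatrix p.1 p.2).det with hsc
  set sr : Set R := Set.range fun p : (Fin (b - c) ↪ Fin b) × (Fin (b - c) ↪ Fin a) =>
    (Mf.submatrix p.1 p.2).det with hsr
  have hIcs : Ic = Ideal.span sc := rfl
  have hIrs : Ir = Ideal.span sr := rfl
  refine ⟨{p : PrimeSpectrum R | ¬ Ic * Ir ≤ p.asIdeal}, ?_, ?_, ?_⟩
  · have heq : {p : PrimeSpectrum R | ¬ Ic * Ir ≤ p.asIdeal} =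
        (PrimeSpectrum.zeroLocus ((Ic * Ir : Ideal R) : Set R))ᶜ := by
      ext p
      simp [PrimeSpectrum.mem_zeroLocus, SetLike.coe_subset_coe]
    rw [heq]
    exact (PrimeSpectrum.isClosed_zeroLocus _).isOpen_compl
  · have hspan : Ic * Ir = Ideal.span (sc * sr) := by
      rw [hIcs, hIrs, Ideal.span_mul_span']
    have hfin : (sc * sr).Finite := (Set.finite_range _).mul (Set.finite_range _)
    have hU : {p : PrimeSpectrum R | ¬ Ic * Ir ≤ p.asIdeal}
        = ⋃ x ∈ (sc * sr), (↑(PrimeSpectrum.basicOpen x) : Set (PrimeSpectrum R)) := by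
      ext p
      simp only [Set.mem_setOf_eq, hspan, Ideal.span_le, Set.mem_iUnion]
      rw [Set.not_subset]
      constructor
      · rintro ⟨x, hx1, hx2⟩
        exact ⟨x, hx1, hx2⟩
      · rintro ⟨x, hx1, hx2⟩
        exact ⟨x, hx1, hx2⟩
    rw [hU]
    exact hfin.isCompact_biUnion fun x _ => PrimeSpectrum.isCompact_basicOpen x
  · intro A _ _
    set φ : R →+* A := algebraMap R A with hφ
    set FA : Matrix (Fin b) (Fin a) A := Mf.map φ with hFA
    set GA : Matrix (Fin c) (Fin b) A := Mg.map φ with hGA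
    have hGAFA : GA * FA = 0 := by
      rw [hGA, hFA, ← Matrix.map_mul, hMgf, Matrix.map_zero ⇑φ (map_zero φ)]
    -- transfer surjectivity
    have hsurj_iff : Function.Surjective (LinearMap.baseChange A g) ↔
        Function.Surjective GA.mulVec := by
      constructor
      · intro hs w
        obtain ⟨x, hx⟩ := hs ((tpEquiv R A c).symm w)
        refine ⟨tpEquiv R A b x, ?_⟩
        rw [← tpEquiv_conj, hx, LinearEquiv.apply_symm_apply]
      · intro hs y
        obtain ⟨u, hu⟩ := hs (tpEquiv R A c y)
        refine ⟨(tpEquiv R A b).symm u, ?_⟩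
        apply (tpEquiv R A c).injective
        rw [tpEquiv_conj, LinearEquiv.apply_symm_apply, hu]
    -- transfer exactness
    have hf1 : ∀ x, tpEquiv R A b (LinearMap.baseChange A f x)
        = FA.mulVecLin (tpEquiv R A a x) := fun x => by
      rw [tpEquiv_conj, mulVecLin_apply]
    have hg1 : ∀ x, tpEquiv R A c (LinearMap.baseChange A g x)
        = GA.mulVecLin (tpEquiv R A b x) := fun x => by
      rw [tpEquiv_conj, mulVecLin_apply]
    have hf2 : ∀ x, (tpEquiv R A b).symm (FA.mulVecLin x)
        = LinearMap.baseChange A f ((tpEquiv R A a).symm x) := fun x => by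
      rw [← LinearEquiv.symm_apply_apply (tpEquiv R A b)
        (LinearMap.baseChange A f ((tpEquiv R A a).symm x)), hf1,
        LinearEquiv.apply_symm_apply]
    have hg2 : ∀ x, (tpEquiv R A c).symm (GA.mulVecLin x)
        = LinearMap.baseChange A g ((tpEquiv R A b).symm x) := fun x => by
      rw [← LinearEquiv.symm_apply_apply (tpEquiv R A c)
        (LinearMap.baseChange A g ((tpEquiv R A b).symm x)), hg1,
        LinearEquiv.apply_symm_apply]
    have hexact_iff : Function.Exact (LinearMap.baseChange A f) (LinearMap.baseChange A g) ↔
        Function.Exact FA.mulVecLin GA.mulVecLin := by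
      constructor
      · exact fun h => exact_conj (tpEquiv R A a) (tpEquiv R A b) (tpEquiv R A c) hf1 hg1 h
      · exact fun h => exact_conj (tpEquiv R A a).symm (tpEquiv R A b).symm
          (tpEquiv R A c).symm hf2 hg2 h
    rw [hsurj_iff, hexact_iff, matrix_exactness_iff FA GA hGAFA]
    have hiff2 : (∀ q : PrimeSpectrum A, PrimeSpectrum.comap (algebraMap R A) q
          ∈ {p : PrimeSpectrum R | ¬ Ic * Ir ≤ p.asIdeal})
        ↔ (Ic * Ir).map φ = ⊤ := forall_comap_mem_iff _
    rw [hiff2, Ideal.map_mul, mul_eq_top_iff, hIc, hIr,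
      ← minorsIdeal_map φ c c b Mg, ← minorsIdeal_map φ (b - c) b a Mf]
end

section
/- Let k be a field, A = k[x, y, z] the polynomial ring in three variables, K its field of fractions, and B the k-subalgebra of K generated by x/y, y and z/y (note A ⊆ B since x = (x/y)·y and z = (z/y)·y). Then the image of the map Spec B → Spec A induced by the inclusion A ⊆ B consists exactly of those prime ideals p of A with y ∉ p, together with the maximal ideal (x, y, z). -/
universe u v

open MvPolynomial

/-- Generic criterion: if the contraction of the extension of a prime `p` is `p`
(expressed elementwise), then `p` is in the range of `Spec` of the ring map. -/
lemma aux_mem_range_comap {A : Type*} {B : Type*} [CommRing A] [CommRing B]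
    (φ : A →+* B) (p : PrimeSpectrum A)
    (h : ∀ a : A, φ a ∈ Ideal.map φ p.asIdeal → a ∈ p.asIdeal) :
    p ∈ Set.range (PrimeSpectrum.comap φ) := by
  obtain ⟨q, hq, hle, hdisj⟩ := Ideal.exists_le_prime_disjoint
    (Ideal.map φ p.asIdeal) (Submonoid.map φ p.asIdeal.primeCompl)
    (by
      rw [Set.disjoint_left]
      rintro b hb hb'
      obtain ⟨a, hap, rfl⟩ := Submonoid.mem_map.mp hb'
      exact hap (h a hb))
  refine ⟨⟨q, hq⟩, PrimeSpectrum.ext ?_⟩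
  rw [PrimeSpectrum.comap_asIdeal]
  apply le_antisymm
  · intro a ha
    by_contra hap
    exact Set.disjoint_left.mp hdisj (Ideal.mem_comap.mp ha)
      (Submonoid.mem_map.mpr ⟨a, hap, rfl⟩)
  · exact Ideal.map_le_iff_le_comap.mp hle

/-- Elements of `(X 0, X 1, X 2)^n` have no coefficients in degrees `< n`. -/
lemma aux_coeff_pow {k : Type u} [Field k] :
    ∀ (n : ℕ) (g : MvPolynomial (Fin 3) k),
      g ∈ (Ideal.span {X 0, X 1, X 2} : Ideal (MvPolynomial (Fin 3) k)) ^ n →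
      ∀ d : Fin 3 →₀ ℕ, (∑ i, d i) < n → coeff d g = 0 := by
  intro n
  induction n with
  | zero => exact fun g _ d hd => absurd hd (Nat.not_lt_zero _)
  | succ n ih =>
    intro g hg
    rw [pow_succ] at hg
    refine Submodule.mul_induction_on hg ?_ ?_
    · intro f hf b hb d hd
      classical
      rw [coeff_mul]
      apply Finset.sum_eq_zero
      rintro ⟨d1, d2⟩ hmem
      rw [Finset.HasAntidiagonal.mem_antidiagonal] at hmem
      by_cases h2 : d2 = 0
      · subst h2
        have hb0 : constantCoeff b = 0 := by
          have hker : (Ideal.span {X 0, X 1, X 2} :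
              Ideal (MvPolynomial (Fin 3) k)) ≤ RingHom.ker constantCoeff := by
            rw [Ideal.span_le]
            rintro r hr
            simp only [Set.mem_insert_iff, Set.mem_singleton_iff] at hr
            rcases hr with rfl | rfl | rfl <;> simp [RingHom.mem_ker]
          exact hker hb
        rw [constantCoeff_eq] at hb0
        simp only [hb0, mul_zero]
      · have hd1 : (∑ i, d1 i) < n := by
          have hsum : (∑ i, d1 i) + (∑ i, d2 i) = ∑ i, d i := by
            rw [← hmem]
            simp [Finsupp.add_apply, Finset.sum_add_distrib]
          have h2' : 0 < ∑ i, d2 i := by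
            rcases Nat.eq_zero_or_pos (∑ i, d2 i) with h | h
            · exact absurd (Finsupp.ext fun i => by
                have := Finset.sum_eq_zero_iff.mp h i (Finset.mem_univ i)
                simpa using this) h2
            · exact h
          omega
        rw [ih f hf d1 hd1, zero_mul]
    · intro a b ha hb d hd
      rw [coeff_add, ha d hd, hb d hd, add_zero]

/-- `(X 0, X 1, X 2)` is the kernel of the constant coefficient map. -/
lemma aux_span_eq_ker {k : Type u} [Field k] :
    (Ideal.span {X 0, X 1, X 2} : Ideal (MvPolynomial (Fin 3) k)) =
      RingHom.ker constantCoeff := by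
  apply le_antisymm
  · rw [Ideal.span_le]
    rintro r hr
    simp only [Set.mem_insert_iff, Set.mem_singleton_iff] at hr
    rcases hr with rfl | rfl | rfl <;> simp [RingHom.mem_ker]
  · intro a ha
    have himg : ({X 0, X 1, X 2} : Set (MvPolynomial (Fin 3) k)) =
        MvPolynomial.X '' Set.univ := by
      ext b
      simp only [Set.image_univ, Set.mem_range, Set.mem_insert_iff,
        Set.mem_singleton_iff]
      constructor
      · rintro (rfl | rfl | rfl) <;> exact ⟨_, rfl⟩
      · rintro ⟨i, rfl⟩
        fin_cases i <;> simp
    rw [himg, mem_ideal_span_X_image]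
    intro d hd
    by_contra hcon
    push_neg at hcon
    have hd0 : d = 0 := Finsupp.ext fun i => hcon i (Set.mem_univ i)
    rw [RingHom.mem_ker, constantCoeff_eq] at ha
    rw [mem_support_iff, hd0] at hd
    exact hd ha

/-- Heart of Example 5.18: for `A = k[x,y,z]` with fraction field `K` and
`B = k[x/y, y, z/y] ⊆ K`, the image of `Spec B → Spec A` consists exactly of the primes `p`
of `A` with `y ∉ p`, together with the maximal ideal `(x, y, z)`. -/
theorem image_spec_of_blowup_chart
    (k : Type u) [Field k]
    (K : Type v) [Field K] [Algebra (MvPolynomial (Fin 3) k) K]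
    [IsFractionRing (MvPolynomial (Fin 3) k) K]
    [Algebra k K] [IsScalarTower k (MvPolynomial (Fin 3) k) K]
    (x y z : K)
    (hx : x = algebraMap (MvPolynomial (Fin 3) k) K (X 0))
    (hy : y = algebraMap (MvPolynomial (Fin 3) k) K (X 1))
    (hz : z = algebraMap (MvPolynomial (Fin 3) k) K (X 2))
    (B : Subalgebra k K) (hB : B = Algebra.adjoin k {x / y, y, z / y})
    (φ : MvPolynomial (Fin 3) k →+* B)
    (hφ : ∀ a : MvPolynomial (Fin 3) k,
      (φ a : K) = algebraMap (MvPolynomial (Fin 3) k) K a) :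
    Set.range (PrimeSpectrum.comap φ) =
      {p : PrimeSpectrum (MvPolynomial (Fin 3) k) | X 1 ∉ p.asIdeal} ∪
        {p : PrimeSpectrum (MvPolynomial (Fin 3) k) |
          p.asIdeal = Ideal.span {X 0, X 1, X 2}} := by
  have hinj : Function.Injective (algebraMap (MvPolynomial (Fin 3) k) K) :=
    IsFractionRing.injective _ _
  have hy0 : y ≠ 0 := by
    rw [hy]
    intro h
    exact MvPolynomial.X_ne_zero 1 (hinj (h.trans (map_zero _).symm))
  have hX1 : (X 1 : MvPolynomial (Fin 3) k) ∈ Ideal.span {X 0, X 1, X 2} :=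
    Ideal.subset_span (by simp)
  -- graded description: every element of B has shape f / y^n with f ∈ m^n
  have hBC : ∀ b : B, ∃ (n : ℕ) (f : MvPolynomial (Fin 3) k),
      f ∈ (Ideal.span {X 0, X 1, X 2} : Ideal (MvPolynomial (Fin 3) k)) ^ n ∧
      (b : K) = algebraMap (MvPolynomial (Fin 3) k) K f / y ^ n := by
    rintro ⟨b, hb⟩
    rw [hB] at hb
    show ∃ n f, _ ∧ b = _
    induction hb using Algebra.adjoin_induction with
    | mem t ht =>
      simp only [Set.mem_insert_iff, Set.mem_singleton_iff] at ht
      rcases ht with rfl | rfl | rfl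
      · exact ⟨1, X 0, by rw [pow_one]; exact Ideal.subset_span (by simp),
          by rw [pow_one, hx]⟩
      · exact ⟨0, X 1, by rw [pow_zero, Ideal.one_eq_top]; exact Submodule.mem_top,
          by rw [pow_zero, div_one, hy]⟩
      · exact ⟨1, X 2, by rw [pow_one]; exact Ideal.subset_span (by simp),
          by rw [pow_one, hz]⟩
    | algebraMap r =>
      refine ⟨0, MvPolynomial.C r, by rw [pow_zero, Ideal.one_eq_top]; exact Submodule.mem_top, ?_⟩
      rw [pow_zero, div_one, ← MvPolynomial.algebraMap_eq,
        ← IsScalarTower.algebraMap_apply]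
    | add s t hs ht ihs iht =>
      obtain ⟨n1, f1, h1, e1⟩ := ihs (by rw [hB]; exact hs)
      obtain ⟨n2, f2, h2, e2⟩ := iht (by rw [hB]; exact ht)
      refine ⟨n1 + n2, f1 * X 1 ^ n2 + f2 * X 1 ^ n1, add_mem ?_ ?_, ?_⟩
      · have h := Ideal.mul_mem_mul h1 (Ideal.pow_mem_pow hX1 n2)
        rwa [← pow_add] at h
      · have h := Ideal.mul_mem_mul (Ideal.pow_mem_pow hX1 n1) h2
        rw [← pow_add ] at h
        rwa [mul_comm]
      · have hn1 : y ^ n1 ≠ 0 := pow_ne_zero _ hy0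
        have hn2 : y ^ n2 ≠ 0 := pow_ne_zero _ hy0
        rw [e1, e2, map_add, map_mul, map_mul, map_pow, map_pow, ← hy, pow_add]
        field_simp
        try ring
    | mul s t hs ht ihs iht =>
      obtain ⟨n1, f1, h1, e1⟩ := ihs (by rw [hB]; exact hs)
      obtain ⟨n2, f2, h2, e2⟩ := iht (by rw [hB]; exact ht)
      refine ⟨n1 + n2, f1 * f2, ?_, ?_⟩
      · rw [pow_add]; exact Ideal.mul_mem_mul h1 h2
      · rw [e1, e2, map_mul, pow_add, div_mul_div_comm]
  have hmax : (Ideal.span {X 0, X 1, X 2} :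
      Ideal (MvPolynomial (Fin 3) k)).IsMaximal := by
    rw [aux_span_eq_ker]
    exact RingHom.ker_isMaximal_of_surjective _ fun c => ⟨C c, by simp⟩
  ext p
  simp only [Set.mem_union, Set.mem_setOf_eq]
  constructor
  · rintro ⟨q, rfl⟩
    by_cases h1 : X 1 ∈ (PrimeSpectrum.comap φ q).asIdeal
    · right
      rw [PrimeSpectrum.comap_asIdeal] at h1 ⊢
      have h1' : φ (X 1) ∈ q.asIdeal := Ideal.mem_comap.mp h1
      have hxyB : x / y ∈ B := hB ▸ Algebra.subset_adjoin (by simp)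
      have hzyB : z / y ∈ B := hB ▸ Algebra.subset_adjoin (by simp)
      have hφ0 : φ (X 0) = ⟨x / y, hxyB⟩ * φ (X 1) := by
        apply Subtype.ext
        rw [MulMemClass.coe_mul, hφ, hφ, ← hx, ← hy, div_mul_cancel₀ _ hy0]
      have hφ2 : φ (X 2) = ⟨z / y, hzyB⟩ * φ (X 1) := by
        apply Subtype.ext
        rw [MulMemClass.coe_mul, hφ, hφ, ← hz, ← hy, div_mul_cancel₀ _ hy0]
      have hge : Ideal.span {X 0, X 1, X 2} ≤ Ideal.comap φ q.asIdeal := by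
        rw [Ideal.span_le]
        rintro r hr
        simp only [Set.mem_insert_iff, Set.mem_singleton_iff] at hr
        rcases hr with rfl | rfl | rfl
        · exact Ideal.mem_comap.mpr (hφ0 ▸ q.asIdeal.mul_mem_left _ h1')
        · exact h1
        · exact Ideal.mem_comap.mpr (hφ2 ▸ q.asIdeal.mul_mem_left _ h1')
      exact (hmax.eq_of_le (Ideal.IsPrime.ne_top inferInstance) hge).symm
    · left
      exact h1
  · rintro (hp | hp) <;> apply aux_mem_range_comap
    · -- case `X 1 ∉ p`
      intro a ha
      obtain ⟨n, f, hf, he⟩ : ∃ n f, f ∈ p.asIdeal ∧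
          ((φ a : K)) = algebraMap (MvPolynomial (Fin 3) k) K f / y ^ n := by
        let J : Ideal B :=
          { carrier := {b : B | ∃ n f, f ∈ p.asIdeal ∧
              (b : K) = algebraMap (MvPolynomial (Fin 3) k) K f / y ^ n}
            add_mem' := by
              rintro b c ⟨n1, f1, h1, e1⟩ ⟨n2, f2, h2, e2⟩
              refine ⟨n1 + n2, f1 * X 1 ^ n2 + f2 * X 1 ^ n1,
                add_mem (p.asIdeal.mul_mem_right _ h1)
                  (p.asIdeal.mul_mem_right _ h2), ?_⟩
              have hn1 : y ^ n1 ≠ 0 := pow_ne_zero _ hy0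
              have hn2 : y ^ n2 ≠ 0 := pow_ne_zero _ hy0
              show ((b + c : B) : K) = _
              rw [AddMemClass.coe_add, e1, e2, map_add, map_mul, map_mul,
                map_pow, map_pow, ← hy, pow_add]
              field_simp
              try ring
            zero_mem' := ⟨0, 0, p.asIdeal.zero_mem, by simp⟩
            smul_mem' := by
              rintro c b ⟨n1, f1, h1, e1⟩
              obtain ⟨n2, f2, -, e2⟩ := hBC c
              refine ⟨n2 + n1, f2 * f1, p.asIdeal.mul_mem_left _ h1, ?_⟩
              show ((c * b : B) : K) = _
              rw [MulMemClass.coe_mul, e1, e2, map_mul, pow_add,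
                div_mul_div_comm] }
        have hle : Ideal.map φ p.asIdeal ≤ J :=
          Ideal.map_le_iff_le_comap.mpr fun r hr =>
            ⟨0, r, hr, by rw [hφ, pow_zero, div_one]⟩
        exact hle ha
      rw [hφ] at he
      have hfa : a * X 1 ^ n = f := by
        apply hinj
        rw [map_mul, map_pow, ← hy, he, div_mul_cancel₀ _ (pow_ne_zero _ hy0)]
      have : a * X 1 ^ n ∈ p.asIdeal := hfa.symm ▸ hf
      rcases p.isPrime.mem_or_mem this with h | h
      · exact h
      · exact absurd (p.isPrime.mem_of_pow_mem _ h) hp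
    · -- case `p = (x, y, z)`
      intro a ha
      rw [hp] at ha ⊢
      obtain ⟨n, f, hf, he⟩ : ∃ n f,
          f ∈ (Ideal.span {X 0, X 1, X 2} :
            Ideal (MvPolynomial (Fin 3) k)) ^ (n + 1) ∧
          ((φ a : K)) = algebraMap (MvPolynomial (Fin 3) k) K f / y ^ n := by
        let J : Ideal B :=
          { carrier := {b : B | ∃ n f,
              f ∈ (Ideal.span {X 0, X 1, X 2} :
                Ideal (MvPolynomial (Fin 3) k)) ^ (n + 1) ∧
              (b : K) = algebraMap (MvPolynomial (Fin 3) k) K f / y ^ n}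
            add_mem' := by
              rintro b c ⟨n1, f1, h1, e1⟩ ⟨n2, f2, h2, e2⟩
              refine ⟨n1 + n2, f1 * X 1 ^ n2 + f2 * X 1 ^ n1, add_mem ?_ ?_, ?_⟩
              · have h := Ideal.mul_mem_mul h1 (Ideal.pow_mem_pow hX1 n2)
                rwa [← pow_add, show n1 + 1 + n2 = n1 + n2 + 1 from by omega] at h
              · have h := Ideal.mul_mem_mul (Ideal.pow_mem_pow hX1 n1) h2
                rw [← pow_add, show n1 + (n2 + 1) = n1 + n2 + 1 from by omega] at h
                rwa [mul_comm]
              · have hn1 : y ^ n1 ≠ 0 := pow_ne_zero _ hy0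
                have hn2 : y ^ n2 ≠ 0 := pow_ne_zero _ hy0
                show ((b + c : B) : K) = _
                rw [AddMemClass.coe_add, e1, e2, map_add, map_mul, map_mul,
                  map_pow, map_pow, ← hy, pow_add]
                field_simp
                try ring
            zero_mem' := ⟨0, 0, Submodule.zero_mem _, by simp⟩
            smul_mem' := by
              rintro c b ⟨n1, f1, h1, e1⟩
              obtain ⟨n2, f2, h2, e2⟩ := hBC c
              refine ⟨n2 + n1, f2 * f1, ?_, ?_⟩
              · have h := Ideal.mul_mem_mul h2 h1
                rwa [← pow_add, show n2 + (n1 + 1) = n2 + n1 + 1 from by omega] at h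
              · show ((c * b : B) : K) = _
                rw [MulMemClass.coe_mul, e1, e2, map_mul, pow_add,
                  div_mul_div_comm] }
        have hle : Ideal.map φ (Ideal.span {X 0, X 1, X 2}) ≤ J :=
          Ideal.map_le_iff_le_comap.mpr fun r hr =>
            ⟨0, r, by rwa [zero_add, pow_one], by rw [hφ, pow_zero, div_one]⟩
        exact hle ha
      rw [hφ] at he
      have hfa : a * X 1 ^ n = f := by
        apply hinj
        rw [map_mul, map_pow, ← hy, he, div_mul_cancel₀ _ (pow_ne_zero _ hy0)]
      have hc : coeff (Finsupp.single (1 : Fin 3) n) f = 0 :=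
        aux_coeff_pow (n + 1) f hf _
          (by simp [Finsupp.single_apply])
      have hca : coeff (Finsupp.single (1 : Fin 3) n) (a * X 1 ^ n) =
          constantCoeff a := by
        rw [X_pow_eq_monomial, coeff_mul_monomial', if_pos le_rfl, tsub_self,
          mul_one, constantCoeff_eq]
      rw [aux_span_eq_ker, RingHom.mem_ker, ← hca, hfa, hc]
end
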